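/- Let G be a Fischer space of symplectic type, ℓ = {a,b,c} a line in two distinct complete quadrilaterals π (extra points x,y,z) and π' (extra points p,q,r) as labeled before. If p ≁ x, then p ∼ y, p ∼ z, q ∼ x, q ∼ z, q ≁ y, r ∼ x, r ∼ y, r ≁ z; moreover setting d := r∧y = q∧z, e := r∧x = p∧z, f := q∧x = p∧y, the points a,b,c,d,e,f form a third complete quadrilateral through ℓ (with lines {a,e,f},{b,d,f},{c,d,e}). -/
import Mathlib


/-- A partial triple system, given by a collinearity relation `col` and a map `third`
sending two distinct collinear points to the third point on their line. -/
structure IsPTS {P : Type*} (col : P → P → Prop) (third : P → P → P) : Prop where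
  symm : ∀ x y, col x y → col y x
  irrefl : ∀ x, ¬ col x x
  third_symm : ∀ x y, col x y → third x y = third y x
  col_third : ∀ x y, col x y → col x (third x y)
  third_ne_left : ∀ x y, col x y → third x y ≠ x
  third_ne_right : ∀ x y, col x y → third x y ≠ y
  third_third : ∀ x y, col x y → third x (third x y) = y
  unique_line : ∀ x y u v, col x y → col u v →
    x ∈ ({u, v, third u v} : Set P) → y ∈ ({u, v, third u v} : Set P) →
    ({x, y, third x y} : Set P) = {u, v, third u v}

/-- A subspace of a partial triple system: a set of points closed under taking
the third point of a line through two of its points. -/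
def IsSubspace {P : Type*} (col : P → P → Prop) (third : P → P → P) (S : Set P) : Prop :=
  ∀ x ∈ S, ∀ y ∈ S, col x y → third x y ∈ S

/-- The subspace generated by a set of points. -/
def fclosure {P : Type*} (col : P → P → Prop) (third : P → P → P) (T : Set P) : Set P :=
  ⋂₀ {S | T ⊆ S ∧ IsSubspace col third S}

/-- The line through two distinct collinear points, as a set. -/
def lineSet {P : Type*} (third : P → P → P) (x y : P) : Set P := {x, y, third x y}

/-- The six points of the complete quadrilateral (dual affine plane of order 2). -/
inductive CQPt | A | B | C | X | Y | Z
deriving DecidableEq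

/-- The "opposite point" involution of the complete quadrilateral. -/
def CQPt.opp : CQPt → CQPt
  | .A => .X | .X => .A | .B => .Y | .Y => .B | .C => .Z | .Z => .C

/-- Collinearity in the complete quadrilateral with lines
{A,B,C}, {A,Y,Z}, {B,X,Z}, {C,X,Y}: two points are collinear iff they are
distinct and not opposite. -/
def CQPt.col (p q : CQPt) : Prop := p ≠ q ∧ q ≠ p.opp

/-- The third point on the line through two distinct collinear points of the
complete quadrilateral. -/
def CQPt.third : CQPt → CQPt → CQPt
  | .A, .B => .C | .B, .A => .C | .A, .C => .B | .C, .A => .B | .B, .C => .A | .C, .B => .A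
  | .A, .Y => .Z | .Y, .A => .Z | .A, .Z => .Y | .Z, .A => .Y | .Y, .Z => .A | .Z, .Y => .A
  | .B, .X => .Z | .X, .B => .Z | .B, .Z => .X | .Z, .B => .X | .X, .Z => .B | .Z, .X => .B
  | .C, .X => .Y | .X, .C => .Y | .C, .Y => .X | .Y, .C => .X | .X, .Y => .C | .Y, .X => .C
  | p, _ => p

/-- A set of points is a complete quadrilateral if it is the isomorphic image of
the standard one (preserving collinearity and the `third` operation). -/
def IsCQSet {P : Type*} (col : P → P → Prop) (third : P → P → P) (S : Set P) : Prop :=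
  ∃ f : CQPt → P, Function.Injective f ∧ Set.range f = S ∧
    (∀ u v, col (f u) (f v) ↔ CQPt.col u v) ∧
    (∀ u v, CQPt.col u v → f (CQPt.third u v) = third (f u) (f v))

/-- A set of points is an affine plane of order 3 if it is the isomorphic image of
`AG(2,3)` (any two distinct points collinear, third point `-(u+v)`). -/
def IsAPSet {P : Type*} (col : P → P → Prop) (third : P → P → P) (S : Set P) : Prop :=
  ∃ f : ZMod 3 × ZMod 3 → P, Function.Injective f ∧ Set.range f = S ∧
    (∀ u v, col (f u) (f v) ↔ u ≠ v) ∧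
    (∀ u v, u ≠ v → f (-(u + v)) = third (f u) (f v))

/-- A Fischer space: a partial triple system in which the subspace generated by two
distinct intersecting lines is a complete quadrilateral or an affine plane of order 3. -/
structure IsFischer {P : Type*} (col : P → P → Prop) (third : P → P → P)
    extends IsPTS col third : Prop where
  dichotomy : ∀ x y u v, col x y → col u v →
    lineSet third x y ≠ lineSet third u v →
    (lineSet third x y ∩ lineSet third u v).Nonempty →
    IsCQSet col third (fclosure col third (lineSet third x y ∪ lineSet third u v)) ∨
    IsAPSet col third (fclosure col third (lineSet third x y ∪ lineSet third u v))

/-- A Fischer space of symplectic type: the subspace generated by two distinct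
intersecting lines is always a complete quadrilateral. -/
structure IsSymplectic {P : Type*} (col : P → P → Prop) (third : P → P → P)
    extends IsPTS col third : Prop where
  cq : ∀ x y u v, col x y → col u v →
    lineSet third x y ≠ lineSet third u v →
    (lineSet third x y ∩ lineSet third u v).Nonempty →
    IsCQSet col third (fclosure col third (lineSet third x y ∪ lineSet third u v))

/-- The six points `a,b,c,x,y,z` form a complete quadrilateral with lines
{a,b,c}, {a,y,z}, {b,x,z}, {c,x,y}. -/
def IsCQThrough {P : Type*} (col : P → P → Prop) (third : P → P → P)
    (a b c x y z : P) : Prop :=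
  [a, b, c, x, y, z].Pairwise (· ≠ ·) ∧
  col a b ∧ third a b = c ∧
  col a y ∧ third a y = z ∧
  col b x ∧ third b x = z ∧
  col c x ∧ third c x = y ∧
  ¬ col a x ∧ ¬ col b y ∧ ¬ col c z

instance : Fintype CQPt :=
  ⟨⟨{.A, .B, .C, .X, .Y, .Z}, by decide⟩, fun x => by cases x <;> decide⟩

instance (p q : CQPt) : Decidable (CQPt.col p q) :=
  inferInstanceAs (Decidable (_ ∧ _))

lemma cq_decide1 : ∀ M U S : CQPt, CQPt.col M U → CQPt.col M S → S = U.opp →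
    CQPt.col U (CQPt.third M S) ∧ CQPt.col (CQPt.third M U) S ∧
    ¬ CQPt.col (CQPt.third M U) (CQPt.third M S) ∧
    CQPt.third U (CQPt.third M S) = CQPt.third (CQPt.third M U) S ∧
    ¬ CQPt.col M (CQPt.third U (CQPt.third M S)) ∧
    M ≠ CQPt.third U (CQPt.third M S) := by decide

lemma cq_decide2 : ∀ M U S : CQPt, CQPt.col M U → CQPt.col M S → CQPt.col U S →
    S ≠ CQPt.third M U →
    ¬ CQPt.col U (CQPt.third M S) ∧ ¬ CQPt.col (CQPt.third M U) S ∧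
    CQPt.col (CQPt.third M U) (CQPt.third M S) ∧
    CQPt.third (CQPt.third M U) (CQPt.third M S) = CQPt.third U S ∧
    ¬ CQPt.col M (CQPt.third U S) ∧
    M ≠ CQPt.third U S := by decide

section Helpers

variable {P : Type*} {col : P → P → Prop} {third : P → P → P}

lemma subset_fclosure (T : Set P) : T ⊆ fclosure col third T :=
  fun _ hx _ hS => hS.1 hx

lemma line_ops (hP : IsPTS col third) {a b c : P} (h : col a b) (h3 : third a b = c) :
    col b a ∧ col a c ∧ col c a ∧ col b c ∧ col c b ∧
    third b a = c ∧ third a c = b ∧ third c a = b ∧ third b c = a ∧ third c b = a := by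
  have hba := hP.symm _ _ h
  have h3' : third b a = c := by rw [← hP.third_symm _ _ h, h3]
  have hac : col a c := h3 ▸ hP.col_third _ _ h
  have hac3 : third a c = b := by rw [← h3, hP.third_third _ _ h]
  have hca := hP.symm _ _ hac
  have hca3 : third c a = b := by rw [← hP.third_symm _ _ hac, hac3]
  have hcb : col c b := hca3 ▸ hP.col_third _ _ hca
  have hcb3 : third c b = a := by rw [← hca3, hP.third_third _ _ hca]
  have hbc := hP.symm _ _ hcb
  have hbc3 : third b c = a := by rw [← hP.third_symm _ _ hcb, hcb3]
  exact ⟨hba, hac, hca, hbc, hcb, h3', hac3, hca3, hbc3, hcb3⟩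

lemma ne_of_col (hP : IsPTS col third) {u v : P} (h : col u v) : u ≠ v :=
  fun he => hP.irrefl v (he ▸ h)

lemma mem_line_of_eq_third (hP : IsPTS col third) {m u s : P}
    (hmu : col m u) (hus : col u s) (hs : s = third m u) :
    m ∈ ({u, s, third u s} : Set P) := by
  have h := hP.unique_line u s m u hus hmu (by simp) (by simp [hs])
  rw [h]; simp

lemma key (hS : IsSymplectic col third) {m u s : P}
    (hmu : col m u) (hms : col m s) (hus : ¬ col u s)
    (hlines : lineSet third m u ≠ lineSet third m s) :
    col u (third m s) ∧ col (third m u) s ∧ ¬ col (third m u) (third m s) ∧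
    third u (third m s) = third (third m u) s ∧
    ¬ col m (third u (third m s)) ∧ m ≠ third u (third m s) := by
  have hint : (lineSet third m u ∩ lineSet third m s).Nonempty :=
    ⟨m, by simp [lineSet], by simp [lineSet]⟩
  obtain ⟨f, hinj, hrange, hcol, hthird⟩ := hS.cq m u m s hmu hms hlines hint
  have hsub : lineSet third m u ∪ lineSet third m s ⊆ Set.range f :=
    hrange ▸ subset_fclosure _
  obtain ⟨M, hM⟩ := hsub (Or.inl (by simp [lineSet] : m ∈ lineSet third m u))
  obtain ⟨U, hU⟩ := hsub (Or.inl (by simp [lineSet] : u ∈ lineSet third m u))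
  obtain ⟨S, hSs⟩ := hsub (Or.inr (by simp [lineSet] : s ∈ lineSet third m s))
  have hMU : CQPt.col M U := (hcol M U).1 (by rw [hM, hU]; exact hmu)
  have hMS : CQPt.col M S := (hcol M S).1 (by rw [hM, hSs]; exact hms)
  have hUS : ¬ CQPt.col U S := fun h => hus (by rw [← hU, ← hSs]; exact (hcol U S).2 h)
  have hUneS : U ≠ S := by
    rintro rfl
    exact hlines (by rw [show u = s by rw [← hU, ← hSs]])
  have hSopp : S = U.opp := by
    by_contra h
    exact hUS ⟨hUneS, h⟩
  obtain ⟨c1, c2, c3, c4, c5, c6⟩ := cq_decide1 M U S hMU hMS hSopp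
  have fMU : f (CQPt.third M U) = third m u := by rw [hthird M U hMU, hM, hU]
  have fMS : f (CQPt.third M S) = third m s := by rw [hthird M S hMS, hM, hSs]
  have fW : f (CQPt.third U (CQPt.third M S)) = third u (third m s) := by
    rw [hthird _ _ c1, hU, fMS]
  refine ⟨?_, ?_, ?_, ?_, ?_, ?_⟩
  · rw [← hU, ← fMS]; exact (hcol _ _).2 c1
  · rw [← fMU, ← hSs]; exact (hcol _ _).2 c2
  · rw [← fMU, ← fMS]; exact fun h => c3 ((hcol _ _).1 h)
  · rw [← fW, c4, hthird _ _ c2, fMU, hSs]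
  · rw [← fW, ← hM]; exact fun h => c5 ((hcol _ _).1 h)
  · rw [← fW, ← hM]; exact fun h => c6 (hinj h)

lemma key2 (hS : IsSymplectic col third) {m u s : P}
    (hmu : col m u) (hms : col m s) (hus : col u s)
    (hlines : lineSet third m u ≠ lineSet third m s) :
    ¬ col u (third m s) ∧ ¬ col (third m u) s ∧ col (third m u) (third m s) ∧
    third (third m u) (third m s) = third u s ∧
    ¬ col m (third u s) ∧ m ≠ third u s := by
  have hP := hS.toIsPTS
  have hsne : s ≠ third m u := by
    intro h
    apply hlines
    have h2 := hP.unique_line m s m u hms hmu (by simp) (by simp [h])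
    exact h2.symm
  have hint : (lineSet third m u ∩ lineSet third m s).Nonempty :=
    ⟨m, by simp [lineSet], by simp [lineSet]⟩
  obtain ⟨f, hinj, hrange, hcol, hthird⟩ := hS.cq m u m s hmu hms hlines hint
  have hsub : lineSet third m u ∪ lineSet third m s ⊆ Set.range f :=
    hrange ▸ subset_fclosure _
  obtain ⟨M, hM⟩ := hsub (Or.inl (by simp [lineSet] : m ∈ lineSet third m u))
  obtain ⟨U, hU⟩ := hsub (Or.inl (by simp [lineSet] : u ∈ lineSet third m u))
  obtain ⟨S, hSs⟩ := hsub (Or.inr (by simp [lineSet] : s ∈ lineSet third m s))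
  have hMU : CQPt.col M U := (hcol M U).1 (by rw [hM, hU]; exact hmu)
  have hMS : CQPt.col M S := (hcol M S).1 (by rw [hM, hSs]; exact hms)
  have hUS : CQPt.col U S := (hcol U S).1 (by rw [hU, hSs]; exact hus)
  have fMU : f (CQPt.third M U) = third m u := by rw [hthird M U hMU, hM, hU]
  have fMS : f (CQPt.third M S) = third m s := by rw [hthird M S hMS, hM, hSs]
  have hSne : S ≠ CQPt.third M U := fun h => hsne (by rw [← hSs, h, fMU])
  obtain ⟨c1, c2, c3, c4, c5, c6⟩ := cq_decide2 M U S hMU hMS hUS hSne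
  have fW : f (CQPt.third U S) = third u s := by rw [hthird U S hUS, hU, hSs]
  refine ⟨?_, ?_, ?_, ?_, ?_, ?_⟩
  · rw [← hU, ← fMS]; exact fun h => c1 ((hcol _ _).1 h)
  · rw [← fMU, ← hSs]; exact fun h => c2 ((hcol _ _).1 h)
  · rw [← fMU, ← fMS]; exact (hcol _ _).2 c3
  · rw [← fMU, ← fMS, ← hthird _ _ c3, c4, fW]
  · rw [← fW, ← hM]; exact fun h => c5 ((hcol _ _).1 h)
  · rw [← fW, ← hM]; exact fun h => c6 (hinj h)

end Helpers
/-- In a Fischer space of symplectic type, let ℓ = {a,b,c} be a line contained in two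
distinct complete quadrilaterals π (extra points x,y,z) and π' (extra points p,q,r).
If `p ≁ x`, then the collinearities are exactly p∼y, p∼z, q∼x, q∼z, r∼x, r∼y, and
setting `d := r∧y = q∧z`, `e := r∧x = p∧z`, `f := q∧x = p∧y`, the points
`a,b,c,d,e,f` form a third complete quadrilateral through ℓ
(with lines {a,e,f}, {b,d,f}, {c,d,e}). -/
theorem stmt16 {P : Type*} (col : P → P → Prop) (third : P → P → P)
    (hS : IsSymplectic col third)
    (a b c x y z p q r : P)
    (hπ : IsCQThrough col third a b c x y z)
    (hπ' : IsCQThrough col third a b c p q r)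
    (hdiff : ({x, y, z} : Set P) ≠ {p, q, r})
    (hpx : ¬ col p x) :
    (col p y ∧ col p z ∧ col q x ∧ ¬ col q y ∧ col q z ∧
      col r x ∧ col r y ∧ ¬ col r z) ∧
    third r y = third q z ∧ third r x = third p z ∧ third q x = third p y ∧
    IsCQThrough col third a b c (third r y) (third r x) (third q x) := by
  have hP := hS.toIsPTS
  obtain ⟨hd1, hab, habc, hay, hayz, hbx, hbxz, hcx, hcxy, hax, hby, hcz⟩ := hπ
  obtain ⟨hd2, -, -, haq, haqr, hbp, hbpr, hcp, hcpq, hap, hbq, hcr⟩ := hπ'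
  simp only [List.pairwise_cons, List.mem_cons, List.not_mem_nil, or_false] at hd1 hd2
  obtain ⟨f1, f2, f3, -⟩ := hd1
  obtain ⟨g1, g2, g3, -⟩ := hd2
  have hab' : a ≠ b := f1 b (by simp)
  have hac' : a ≠ c := f1 c (by simp)
  have hax' : a ≠ x := f1 x (by simp)
  have hbc' : b ≠ c := f2 c (by simp)
  have hby' : b ≠ y := f2 y (by simp)
  have hcz' : c ≠ z := f3 z (by simp)
  have hap' : a ≠ q := g1 q (by simp)
  have hbp' : b ≠ p := g2 p (by simp)
  have hcp' : c ≠ p := g3 p (by simp)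
  obtain ⟨hxc, hcy, hyc, hxy, hyx, -, hcy3, hyc3, hxy3, hyx3⟩ := line_ops hP hcx hcxy
  obtain ⟨hxb, hbz, hzb, hxz, hzx, -, hbz3, hzb3, hxz3, hzx3⟩ := line_ops hP hbx hbxz
  obtain ⟨hya, haz, hza, hyz, hzy, -, haz3, hza3, hyz3, hzy3⟩ := line_ops hP hay hayz
  obtain ⟨hpc, hcq, hqc, hpq, hqp, -, hcq3, hqc3, hpq3, hqp3⟩ := line_ops hP hcp hcpq
  obtain ⟨hpb, hbr, hrb, hpr, hrp, -, hbr3, hrb3, hpr3, hrp3⟩ := line_ops hP hbp hbpr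
  obtain ⟨hqa, har, hra, hqr, hrq, -, har3, hra3, hqr3, hrq3⟩ := line_ops hP haq haqr
  have hpnex : p ≠ x := by
    rintro rfl
    apply hdiff
    have hq : q = y := by rw [← hcpq, hcxy]
    have hr : r = z := by rw [← hbpr, hbxz]
    rw [hq, hr]
  have hxp : ¬ col x p := fun h => hpx (hP.symm _ _ h)
  have hl1 : lineSet third c x ≠ lineSet third c p := by
    intro h
    have hpm : p ∈ lineSet third c x := by rw [h]; simp [lineSet]
    simp only [lineSet, Set.mem_insert_iff, Set.mem_singleton_iff] at hpm
    rcases hpm with h1 | h1 | h1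
    · exact hcp' h1.symm
    · exact hpnex h1
    · rw [hcxy] at h1; exact hpx (h1 ▸ hyx)
  have hl2 : lineSet third b x ≠ lineSet third b p := by
    intro h
    have hpm : p ∈ lineSet third b x := by rw [h]; simp [lineSet]
    simp only [lineSet, Set.mem_insert_iff, Set.mem_singleton_iff] at hpm
    rcases hpm with h1 | h1 | h1
    · exact hbp' h1.symm
    · exact hpnex h1
    · rw [hbxz] at h1; exact hpx (h1 ▸ hzx)
  have K1 := key hS hcx hcp hxp hl1
  rw [hcxy, hcpq] at K1
  obtain ⟨hxq, hyp', hyq, heq1, hcf, hcnef⟩ := K1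
  have K2 := key hS hbx hbp hxp hl2
  rw [hbxz, hbpr] at K2
  obtain ⟨hxr, hzp, hzr, heq2, hbe, hbnee⟩ := K2
  have hl3 : lineSet third a y ≠ lineSet third a q := by
    intro h
    have hqm : q ∈ lineSet third a y := by rw [h]; simp [lineSet]
    simp only [lineSet, Set.mem_insert_iff, Set.mem_singleton_iff] at hqm
    rcases hqm with h1 | h1 | h1
    · exact hap' h1.symm
    · exact hpnex (by rw [← hcq3, h1, hcy3])
    · rw [hayz] at h1; exact hcz (h1 ▸ hcq)
  have K3 := key hS hay haq hyq hl3
  rw [hayz, haqr] at K3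
  obtain ⟨hyr, hzq, -, heq3, had, haned⟩ := K3
  -- key2 applications
  have hl4 : lineSet third z q ≠ lineSet third z p := by
    intro h
    have hpm : p ∈ lineSet third z q := by rw [h]; simp [lineSet]
    simp only [lineSet, Set.mem_insert_iff, Set.mem_singleton_iff] at hpm
    rcases hpm with h1 | h1 | h1
    · exact hP.irrefl z (h1 ▸ hzp)
    · exact hP.irrefl q (h1 ▸ hqp)
    · have hm := mem_line_of_eq_third hP hzq hqp h1
      rw [hqp3] at hm
      simp only [Set.mem_insert_iff, Set.mem_singleton_iff] at hm
      rcases hm with h2 | h2 | h2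
      · exact hP.irrefl q (h2 ▸ hzq)
      · exact hP.irrefl p (h2 ▸ hzp)
      · exact hcz' h2.symm
  have K4 := key2 hS hzq hzp hqp hl4
  rw [← heq2, ← heq3, hqp3] at K4
  obtain ⟨hqe, hdpn, hde, hdec, -, -⟩ := K4
  have hl5 : lineSet third y r ≠ lineSet third y p := by
    intro h
    have hpm : p ∈ lineSet third y r := by rw [h]; simp [lineSet]
    simp only [lineSet, Set.mem_insert_iff, Set.mem_singleton_iff] at hpm
    rcases hpm with h1 | h1 | h1
    · exact hP.irrefl y (h1 ▸ hyp')
    · exact hP.irrefl r (h1 ▸ hrp)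
    · have hm := mem_line_of_eq_third hP hyr hrp h1
      rw [hrp3] at hm
      simp only [Set.mem_insert_iff, Set.mem_singleton_iff] at hm
      rcases hm with h2 | h2 | h2
      · exact hP.irrefl r (h2 ▸ hyr)
      · exact hP.irrefl p (h2 ▸ hyp')
      · exact hby' h2.symm
  have K5 := key2 hS hyr hyp' hrp hl5
  rw [← heq1, hrp3] at K5
  obtain ⟨hrf, -, hdf, hdfb, -, -⟩ := K5
  have hl6 : lineSet third x r ≠ lineSet third x q := by
    intro h
    have hqm : q ∈ lineSet third x r := by rw [h]; simp [lineSet]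
    simp only [lineSet, Set.mem_insert_iff, Set.mem_singleton_iff] at hqm
    rcases hqm with h1 | h1 | h1
    · exact hP.irrefl x (h1 ▸ hxq)
    · exact hP.irrefl r (h1 ▸ hrq)
    · have hm := mem_line_of_eq_third hP hxr hrq h1
      rw [hrq3] at hm
      simp only [Set.mem_insert_iff, Set.mem_singleton_iff] at hm
      rcases hm with h2 | h2 | h2
      · exact hP.irrefl r (h2 ▸ hxr)
      · exact hP.irrefl q (h2 ▸ hxq)
      · exact hax' h2.symm
  have K6 := key2 hS hxr hxq hrq hl6
  rw [hrq3] at K6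
  obtain ⟨-, heqq, hef, hefa, -, -⟩ := K6
  -- the three new lines
  obtain ⟨-, hdc, hcd, hec, hce, -, -, hcd3, -, -⟩ := line_ops hP hde hdec
  obtain ⟨-, hdb, hbd, hfb, hbf, -, -, hbd3, -, -⟩ := line_ops hP hdf hdfb
  obtain ⟨-, hea, hae, hfa, haf, -, -, hae3, -, -⟩ := line_ops hP hef hefa
  -- symmetric collinearities
  have hry : col r y := hP.symm _ _ hyr
  have hqz : col q z := hP.symm _ _ hzq
  have hrx : col r x := hP.symm _ _ hxr
  have hpz : col p z := hP.symm _ _ hzp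
  have hqx : col q x := hP.symm _ _ hxq
  have hpy : col p y := hP.symm _ _ hyp'
  refine ⟨⟨hpy, hpz, hqx, fun h => hyq (hP.symm _ _ h), hqz, hrx, hry,
    fun h => hzr (hP.symm _ _ h)⟩, ?_, ?_, ?_, ?_⟩
  · rw [hP.third_symm r y hry, hP.third_symm q z hqz]; exact heq3
  · rw [hP.third_symm r x hrx, hP.third_symm p z hpz]; exact heq2
  · rw [hP.third_symm q x hqx, hP.third_symm p y hpy]; exact heq1
  rw [hP.third_symm r y hry, hP.third_symm r x hrx, hP.third_symm q x hqx]
  refine ⟨?_, hab, habc, hae, hae3, hbd, hbd3, hcd, hcd3, had, hbe, hcf⟩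
  have hde' : third y r ≠ third x r := fun h => hP.third_ne_right c (third y r) hcd (hcd3.trans h.symm)
  have hdf' : third y r ≠ third x q := fun h => hP.third_ne_right b (third y r) hbd (hbd3.trans h.symm)
  have hef' : third x r ≠ third x q := fun h => hP.third_ne_right a (third x r) hae (hae3.trans h.symm)
  simp only [List.pairwise_cons, List.mem_cons, List.not_mem_nil, or_false, List.Pairwise.nil]
  refine ⟨fun t ht => ?_, fun t ht => ?_, fun t ht => ?_, fun t ht => ?_, fun t ht => ?_, fun t ht => ht.elim, trivial⟩
  · rcases ht with rfl | rfl | rfl | rfl | rfl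
    exacts [hab', hac', haned, ne_of_col hP hae, ne_of_col hP haf]
  · rcases ht with rfl | rfl | rfl | rfl
    exacts [hbc', ne_of_col hP hbd, hbnee, ne_of_col hP hbf]
  · rcases ht with rfl | rfl | rfl
    exacts [ne_of_col hP hcd, ne_of_col hP hce, hcnef]
  · rcases ht with rfl | rfl
    exacts [hde', hdf']
  · rcases ht with rfl
    exact hef'
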